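/- Let T be a graph such that every connected subgraph without a K_4 is 2-degenerate, and suppose every K_4 in T arises from a 'center' vertex of degree 3 whose deletion from any subgraph preserves connectivity of components. Then every non-empty subgraph I ⊆ T with c connected components and r(I) copies of K_4 satisfies |E(I)| ≤ 2|V(I)| + r(I) − 3c. -/

import Mathlib

/-- A graph is 2-degenerate: every non-empty (induced) subgraph has a vertex of degree
at most `2`. -/
def TwoDegenerate {V : Type} (G : SimpleGraph V) : Prop :=
  ∀ A : Set V, A.Nonempty → ∃ v ∈ A, ({u | u ∈ A ∧ G.Adj v u}).ncard ≤ 2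

namespace Stmt9Aux

open SimpleGraph

set_option linter.unusedSectionVars false
set_option maxHeartbeats 1000000

variable {V : Type} [Fintype V] {T : SimpleGraph V}

lemma reach_eq_of_no_adj {W : Type} {G : SimpleGraph W} (h : ∀ a b, ¬ G.Adj a b)
    {u v : W} (r : G.Reachable u v) : u = v := by
  obtain ⟨w⟩ := r
  cases w with
  | nil => rfl
  | cons ha _ => exact absurd ha (h _ _)

lemma card_comp_le_of_cover (I I' : T.Subgraph) (hle : I' ≤ I)
    (hcov : ∀ v (hv : v ∈ I.verts), ∃ u, ∃ hu : u ∈ I'.verts,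
      I.coe.Reachable ⟨v, hv⟩ ⟨u, hle.1 hu⟩) :
    Nat.card I.coe.ConnectedComponent ≤ Nat.card I'.coe.ConnectedComponent := by
  apply Nat.card_le_card_of_surjective (ConnectedComponent.map (Subgraph.inclusion hle))
  intro C
  induction C using ConnectedComponent.ind with
  | _ v =>
    obtain ⟨u, hu, hr⟩ := hcov v.1 v.2
    refine ⟨I'.coe.connectedComponentMk ⟨u, hu⟩, ?_⟩
    rw [ConnectedComponent.map_mk]
    exact ConnectedComponent.sound (hr.symm)

lemma card_comp_le_succ_of_cover (I I' : T.Subgraph) (hle : I' ≤ I)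
    (x₀ : V) (hx₀ : x₀ ∈ I.verts)
    (hcov : ∀ v (hv : v ∈ I.verts), (∃ u, ∃ hu : u ∈ I'.verts,
      I.coe.Reachable ⟨v, hv⟩ ⟨u, hle.1 hu⟩) ∨ I.coe.Reachable ⟨v, hv⟩ ⟨x₀, hx₀⟩) :
    Nat.card I.coe.ConnectedComponent ≤ Nat.card I'.coe.ConnectedComponent + 1 := by
  have hsum : Nat.card (I'.coe.ConnectedComponent ⊕ Unit)
      = Nat.card I'.coe.ConnectedComponent + 1 := by
    rw [Nat.card_sum]; simp
  rw [← hsum]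
  apply Nat.card_le_card_of_surjective
    (Sum.elim (ConnectedComponent.map (Subgraph.inclusion hle))
      (fun _ => I.coe.connectedComponentMk ⟨x₀, hx₀⟩))
  intro C
  induction C using ConnectedComponent.ind with
  | _ v =>
    rcases hcov v.1 v.2 with ⟨u, hu, hr⟩ | hr
    · refine ⟨Sum.inl (I'.coe.connectedComponentMk ⟨u, hu⟩), ?_⟩
      simp only [Sum.elim_inl, ConnectedComponent.map_mk]
      exact ConnectedComponent.sound hr.symm
    · exact ⟨Sum.inr Unit.unit, (ConnectedComponent.sound hr.symm)⟩

lemma card_comp_le_one (I : T.Subgraph) (x₀ : V) (hx₀ : x₀ ∈ I.verts)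
    (hcov : ∀ v (hv : v ∈ I.verts), I.coe.Reachable ⟨v, hv⟩ ⟨x₀, hx₀⟩) :
    Nat.card I.coe.ConnectedComponent ≤ 1 := by
  have h1 : Nat.card Unit = 1 := by simp
  rw [← h1]
  apply Nat.card_le_card_of_surjective (fun _ : Unit => I.coe.connectedComponentMk ⟨x₀, hx₀⟩)
  intro C
  induction C using ConnectedComponent.ind with
  | _ v => exact ⟨Unit.unit, ConnectedComponent.sound (hcov v.1 v.2).symm⟩

lemma no_two_big_nbrs
    (hdel : ∀ H : T.Subgraph, H.Connected →
      ((H.deleteVerts {x | (T.neighborSet x).ncard = 3}).coe).Preconnected)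
    {x u v : V} (hx3 : (T.neighborSet x).ncard = 3)
    (hu : T.Adj x u) (hv : T.Adj x v) (huv : u ≠ v)
    (hu3 : (T.neighborSet u).ncard ≠ 3) (hv3 : (T.neighborSet v).ncard ≠ 3) : False := by
  set D3 : Set V := {y | (T.neighborSet y).ncard = 3} with hD3
  set H : T.Subgraph :=
    { verts := {u, x, v}
      Adj := fun p q => (p = u ∧ q = x) ∨ (p = x ∧ q = u) ∨ (p = x ∧ q = v) ∨ (p = v ∧ q = x)
      adj_sub := by
        rintro p q (⟨rfl, rfl⟩ | ⟨rfl, rfl⟩ | ⟨rfl, rfl⟩ | ⟨rfl, rfl⟩)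
        · exact hu.symm
        · exact hu
        · exact hv
        · exact hv.symm
      edge_vert := by
        rintro p q (⟨rfl, rfl⟩ | ⟨rfl, rfl⟩ | ⟨rfl, rfl⟩ | ⟨rfl, rfl⟩) <;> simp
      symm := by
        constructor
        rintro p q (⟨rfl, rfl⟩ | ⟨rfl, rfl⟩ | ⟨rfl, rfl⟩ | ⟨rfl, rfl⟩) <;> tauto } with hH
  have hxH : x ∈ H.verts := by simp [hH]
  have hcon : H.Connected := by
    rw [Subgraph.connected_iff]
    constructor
    · constructor
      intro p q
      have key : ∀ p : H.verts, H.coe.Reachable p ⟨x, hxH⟩ := by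
        rintro ⟨p, hp | hp | hp⟩
        · exact (SimpleGraph.Adj.reachable (by simp [hH, Subgraph.coe_adj, hp]))
        · subst hp; rfl
        · simp only [Set.mem_singleton_iff] at hp
          exact (SimpleGraph.Adj.reachable (by simp [hH, Subgraph.coe_adj, hp]))
      exact (key p).trans (key q).symm
    · exact ⟨x, hxH⟩
  have hpre := hdel H hcon
  have huD : u ∈ (H.deleteVerts D3).verts := by
    rw [Subgraph.deleteVerts_verts]
    exact ⟨by simp [hH], hu3⟩
  have hvD : v ∈ (H.deleteVerts D3).verts := by
    rw [Subgraph.deleteVerts_verts]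
    exact ⟨by simp [hH], hv3⟩
  have hreach := hpre ⟨u, huD⟩ ⟨v, hvD⟩
  have hnoadj : ∀ a b, ¬ (H.deleteVerts D3).coe.Adj a b := by
      intro a b hab
      rw [Subgraph.coe_adj, Subgraph.deleteVerts_adj] at hab
      obtain ⟨-, ha3, -, hb3, habH⟩ := hab
      rcases habH with ⟨h1, h2⟩ | ⟨h1, h2⟩ | ⟨h1, h2⟩ | ⟨h1, h2⟩
      · rw [h2] at hb3; exact hb3 hx3
      · rw [h1] at ha3; exact ha3 hx3
      · rw [h1] at ha3; exact ha3 hx3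
      · rw [h2] at hb3; exact hb3 hx3
  have := reach_eq_of_no_adj hnoadj hreach
  exact huv (congrArg Subtype.val this)

lemma k4_structure
    (hdel : ∀ H : T.Subgraph, H.Connected →
      ((H.deleteVerts {x | (T.neighborSet x).ncard = 3}).coe).Preconnected)
    {s : Finset V} (hs : T.IsNClique 4 s) {x : V} (hx : x ∈ s)
    (hx3 : (T.neighborSet x).ncard = 3) :
    ∃ a b w : V, a ∈ s ∧ b ∈ s ∧ w ∈ s ∧
      x ≠ a ∧ x ≠ b ∧ x ≠ w ∧ a ≠ b ∧ a ≠ w ∧ b ≠ w ∧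
      T.neighborSet x = {a, b, w} ∧ T.neighborSet a = {x, b, w} ∧
      T.neighborSet b = {x, a, w} ∧ (↑s : Set V) = {x, a, b, w} := by
  classical
  have hcard := hs.card_eq
  have herase : (s.erase x).card = 3 := by rw [Finset.card_erase_of_mem hx, hcard]
  obtain ⟨a, b, c, hab, hac, hbc, habc⟩ := Finset.card_eq_three.mp herase
  have hmem : ∀ y, y ∈ s.erase x → y ∈ s ∧ y ≠ x := by
    intro y hy
    exact ⟨Finset.mem_of_mem_erase hy, Finset.ne_of_mem_erase hy⟩
  have haS := hmem a (habc ▸ by simp)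
  have hbS := hmem b (habc ▸ by simp)
  have hcS := hmem c (habc ▸ by simp)
  have hadj : ∀ y ∈ s, y ≠ x → T.Adj x y := fun y hy hyx =>
    hs.1 (by exact_mod_cast hx) (by exact_mod_cast hy) (Ne.symm hyx)
  have hadj2 : ∀ y ∈ s, ∀ z ∈ s, y ≠ z → T.Adj y z := fun y hy z hz hyz =>
    hs.1 (by exact_mod_cast hy) (by exact_mod_cast hz) hyz
  have haA := hadj a haS.1 haS.2
  have hbA := hadj b hbS.1 hbS.2
  have hcA := hadj c hcS.1 hcS.2
  have hNx : T.neighborSet x = {a, b, c} := by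
    have hsub : ({a, b, c} : Set V) ⊆ T.neighborSet x := by
      intro y hy
      simp only [Set.mem_insert_iff, Set.mem_singleton_iff] at hy
      rw [SimpleGraph.mem_neighborSet]
      rcases hy with h | h | h <;> rw [h]
      · exact haA
      · exact hbA
      · exact hcA
    have h3 : ({a, b, c} : Set V).ncard = 3 := by
      rw [Set.ncard_eq_three]; exact ⟨a, b, c, hab, hac, hbc, rfl⟩
    exact (Set.eq_of_subset_of_ncard_le hsub (by rw [hx3, h3]) (Set.toFinite _)).symm
  have key : ∀ u v : V, T.Adj x u → T.Adj x v → u ≠ v →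
      (T.neighborSet u).ncard = 3 ∨ (T.neighborSet v).ncard = 3 := by
    intro u v h1 h2 h3
    by_contra hcon
    push_neg at hcon
    exact no_two_big_nbrs hdel hx3 h1 h2 h3 hcon.1 hcon.2
  have coeS : ∀ p q r : V, p ∈ s → q ∈ s → r ∈ s → p ≠ x → q ≠ x → r ≠ x →
      ({p, q, r} : Set V) = {a, b, c} → p ≠ q → p ≠ r → q ≠ r →
      (T.neighborSet p).ncard = 3 → (T.neighborSet q).ncard = 3 →
      ∃ a' b' w' : V, a' ∈ s ∧ b' ∈ s ∧ w' ∈ s ∧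
      x ≠ a' ∧ x ≠ b' ∧ x ≠ w' ∧ a' ≠ b' ∧ a' ≠ w' ∧ b' ≠ w' ∧
      T.neighborSet x = {a', b', w'} ∧ T.neighborSet a' = {x, b', w'} ∧
      T.neighborSet b' = {x, a', w'} ∧ (↑s : Set V) = {x, a', b', w'} := by
    intro p q r hp hq hr hpx hqx hrx hset hpq hpr hqr hp3 hq3
    refine ⟨p, q, r, hp, hq, hr, Ne.symm hpx, Ne.symm hqx, Ne.symm hrx, hpq, hpr, hqr, ?_, ?_, ?_, ?_⟩
    · rw [hNx, ← hset]
    · have hsub : ({x, q, r} : Set V) ⊆ T.neighborSet p := by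
        intro y hy
        simp only [Set.mem_insert_iff, Set.mem_singleton_iff] at hy
        rw [SimpleGraph.mem_neighborSet]
        rcases hy with h | h | h <;> rw [h]
        · exact (hadj p hp hpx).symm
        · exact hadj2 p hp q hq hpq
        · exact hadj2 p hp r hr hpr
      have h3 : ({x, q, r} : Set V).ncard = 3 := by
        rw [Set.ncard_eq_three]; exact ⟨x, q, r, Ne.symm hqx, Ne.symm hrx, hqr, rfl⟩
      exact (Set.eq_of_subset_of_ncard_le hsub (by rw [hp3, h3]) (Set.toFinite _)).symm
    · have hsub : ({x, p, r} : Set V) ⊆ T.neighborSet q := by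
        intro y hy
        simp only [Set.mem_insert_iff, Set.mem_singleton_iff] at hy
        rw [SimpleGraph.mem_neighborSet]
        rcases hy with h | h | h <;> rw [h]
        · exact (hadj q hq hqx).symm
        · exact (hadj2 p hp q hq hpq).symm
        · exact hadj2 q hq r hr hqr
      have h3 : ({x, p, r} : Set V).ncard = 3 := by
        rw [Set.ncard_eq_three]; exact ⟨x, p, r, Ne.symm hpx, Ne.symm hrx, hpr, rfl⟩
      exact (Set.eq_of_subset_of_ncard_le hsub (by rw [hq3, h3]) (Set.toFinite _)).symm
    · have : s = insert x (s.erase x) := (Finset.insert_erase hx).symm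
      rw [this, habc]
      push_cast
      rw [← hset]
  by_cases ha3 : (T.neighborSet a).ncard = 3
  · by_cases hb3 : (T.neighborSet b).ncard = 3
    · exact coeS a b c haS.1 hbS.1 hcS.1 haS.2 hbS.2 hcS.2 rfl hab hac hbc ha3 hb3
    · have hc3 : (T.neighborSet c).ncard = 3 :=
        ((key b c hbA hcA hbc).resolve_left hb3)
      refine coeS a c b haS.1 hcS.1 hbS.1 haS.2 hcS.2 hbS.2 ?_ hac hab (Ne.symm hbc) ha3 hc3
      ext y; simp; tauto
  · have hb3 : (T.neighborSet b).ncard = 3 := ((key a b haA hbA hab).resolve_left ha3)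
    have hc3 : (T.neighborSet c).ncard = 3 := ((key a c haA hcA hac).resolve_left ha3)
    refine coeS b c a hbS.1 hcS.1 haS.1 hbS.2 hcS.2 haS.2 ?_ hbc (Ne.symm hab) (Ne.symm hac) hb3 hc3
    ext y; simp; tauto

lemma twoDeg_count (H : T.Subgraph) (hd : TwoDegenerate H.coe) :
    ∀ (n : ℕ) (A : Set V), A.ncard = n → A ⊆ H.verts → 2 ≤ n →
      ({e | e ∈ H.edgeSet ∧ ∀ x ∈ e, x ∈ A}).ncard + 3 ≤ 2 * n := by
  intro n
  induction n using Nat.strong_induction_on with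
  | _ n ih =>
    intro A hA hAv h2
    have hAne : A.Nonempty := Set.nonempty_of_ncard_ne_zero (by omega)
    have hA'ne : (Subtype.val ⁻¹' A : Set ↥H.verts).Nonempty := by
      obtain ⟨a, ha⟩ := hAne
      exact ⟨⟨a, hAv ha⟩, ha⟩
    obtain ⟨v', hv'A, hv'deg⟩ := hd (Subtype.val ⁻¹' A) hA'ne
    set v : V := ↑v' with hv
    have hvA : v ∈ A := hv'A
    have hNle : ({u | u ∈ A ∧ H.Adj v u}).ncard ≤ 2 := by
      have himg : {u | u ∈ A ∧ H.Adj v u} =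
          Subtype.val '' {u : ↥H.verts | u ∈ (Subtype.val ⁻¹' A : Set ↥H.verts) ∧ H.coe.Adj v' u} := by
        ext u
        constructor
        · rintro ⟨huA, hadj⟩
          exact ⟨⟨u, hadj.snd_mem⟩, ⟨huA, by rwa [Subgraph.coe_adj]⟩, rfl⟩
        · rintro ⟨u', ⟨hu'A, hu'adj⟩, rfl⟩
          exact ⟨hu'A, by rwa [Subgraph.coe_adj] at hu'adj⟩
      rw [himg, Set.ncard_image_of_injective _ Subtype.val_injective]
      exact hv'deg
    rcases eq_or_lt_of_le h2 with h2' | h3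
    · obtain ⟨p, q, hpq, hApq⟩ := Set.ncard_eq_two.mp (by rw [hA, ← h2'])
      have hsub : {e | e ∈ H.edgeSet ∧ ∀ x ∈ e, x ∈ A} ⊆ {s(p, q)} := by
        rintro e ⟨he, hall⟩
        induction e with
        | _ y z =>
          have hyz : y ≠ z := (H.adj_sub (Subgraph.mem_edgeSet.mp he)).ne
          have hy := hall y (by simp)
          have hz := hall z (by simp)
          rw [hApq] at hy hz
          simp only [Set.mem_insert_iff, Set.mem_singleton_iff] at hy hz ⊢
          rcases hy with rfl | rfl <;> rcases hz with rfl | rfl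
          · exact absurd rfl hyz
          · rfl
          · exact Sym2.eq_swap
          · exact absurd rfl hyz
      have := Set.ncard_le_ncard hsub (Set.toFinite _)
      simp only [Set.ncard_singleton] at this
      omega
    · set B : Set V := A \ {v} with hB
      have hBcard : B.ncard = n - 1 := by
        rw [hB, Set.ncard_diff_singleton_of_mem hvA, hA]
      have hBsub : B ⊆ H.verts := fun u hu => hAv hu.1
      have hIH := ih (n - 1) (by omega) B hBcard hBsub (by omega)
      set Ev : Set (Sym2 V) := {e | e ∈ H.edgeSet ∧ (∀ x ∈ e, x ∈ A) ∧ v ∈ e} with hEv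
      have hEvle : Ev.ncard ≤ 2 := by
        refine le_trans ?_ hNle
        classical
        apply Set.ncard_le_ncard_of_injOn
          (fun e => if h : v ∈ e then Sym2.Mem.other h else v)
        · rintro e ⟨he, hall, hve⟩
          simp only [dif_pos hve]
          refine ⟨hall _ (Sym2.other_mem hve), ?_⟩
          rw [← Subgraph.mem_edgeSet, Sym2.other_spec hve]
          exact he
        · rintro e ⟨he, hall, hve⟩ e' ⟨he', hall', hve'⟩ hfe
          simp only [dif_pos hve, dif_pos hve'] at hfe
          rw [← Sym2.other_spec hve, ← Sym2.other_spec hve', hfe]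
      have hsplit : {e | e ∈ H.edgeSet ∧ ∀ x ∈ e, x ∈ A} ⊆
          {e | e ∈ H.edgeSet ∧ ∀ x ∈ e, x ∈ B} ∪ Ev := by
        rintro e ⟨he, hall⟩
        by_cases hve : v ∈ e
        · exact Or.inr ⟨he, hall, hve⟩
        · refine Or.inl ⟨he, fun x hx => ⟨hall x hx, ?_⟩⟩
          intro hxv
          rw [Set.mem_singleton_iff] at hxv
          exact hve (hxv ▸ hx)
      have h1 := Set.ncard_le_ncard hsplit (Set.toFinite _)
      have h2' := Set.ncard_union_le {e | e ∈ H.edgeSet ∧ ∀ x ∈ e, x ∈ B} Ev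
      omega


lemma main_aux (T : SimpleGraph V)
    (h2deg : ∀ H : T.Subgraph, H.Connected → H.coe.CliqueFree 4 →
      TwoDegenerate H.coe)
    (hcenter : ∀ s : Finset V, T.IsNClique 4 s →
      ∃ x ∈ s, (T.neighborSet x).ncard = 3)
    (hdel : ∀ H : T.Subgraph, H.Connected →
      ((H.deleteVerts {x | (T.neighborSet x).ncard = 3}).coe).Preconnected) :
    ∀ (n : ℕ) (I : T.Subgraph), I.verts.ncard = n → I.verts.Nonempty →
      (∀ v ∈ I.verts, ∃ u, I.Adj v u) →
      I.edgeSet.ncard + 3 * Nat.card I.coe.ConnectedComponent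
        ≤ 2 * I.verts.ncard + ({s : Finset V | I.spanningCoe.IsNClique 4 s}).ncard := by
  intro n
  induction n using Nat.strong_induction_on with
  | _ n ih =>
    intro I hn hne hiso
    by_cases hK4 : ∃ s : Finset V, I.spanningCoe.IsNClique 4 s
    · -- Case A : there is a K₄
      obtain ⟨s, hsI⟩ := hK4
      have hsT : T.IsNClique 4 s := hsI.mono I.spanningCoe_le
      obtain ⟨x, hx, hx3⟩ := hcenter s hsT
      obtain ⟨a, b, w, haS, hbS, hwS, hxa, hxb, hxw, hab, haw, hbw, hNx, hNa, hNb, hsSet⟩ :=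
        k4_structure hdel hsT hx hx3
      have hIadj : ∀ p ∈ s, ∀ q ∈ s, p ≠ q → I.Adj p q := by
        intro p hp q hq hpq
        have := hsI.1 (by exact_mod_cast hp) (by exact_mod_cast hq) hpq
        rwa [Subgraph.spanningCoe_adj] at this
      have hxv : x ∈ I.verts := (hIadj x hx a haS hxa).fst_mem
      have hav : a ∈ I.verts := (hIadj a haS x hx (Ne.symm hxa)).fst_mem
      have hbv : b ∈ I.verts := (hIadj b hbS x hx (Ne.symm hxb)).fst_mem
      have hwv : w ∈ I.verts := (hIadj w hwS x hx (Ne.symm hxw)).fst_mem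
      -- the six edges of the K₄ incident to x, a, b
      have hS6 : ∀ y z : V, I.Adj y z → (y = x ∨ y = a ∨ y = b) →
          s(y, z) ∈ ({s(x,a), s(x,b), s(x,w), s(a,b), s(a,w), s(b,w)} : Set (Sym2 V)) := by
        intro y z hyz hy
        have hT : T.Adj y z := I.adj_sub hyz
        simp only [Set.mem_insert_iff, Set.mem_singleton_iff]
        rcases hy with rfl | rfl | rfl
        · have hz : z ∈ T.neighborSet y := hT
          rw [hNx] at hz
          rcases hz with rfl | rfl | rfl
          · exact Or.inl rfl
          · exact Or.inr (Or.inl rfl)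
          · exact Or.inr (Or.inr (Or.inl rfl))
        · have hz : z ∈ T.neighborSet y := hT
          rw [hNa] at hz
          rcases hz with rfl | rfl | rfl
          · exact Or.inl (Sym2.eq_swap)
          · exact Or.inr (Or.inr (Or.inr (Or.inl rfl)))
          · exact Or.inr (Or.inr (Or.inr (Or.inr (Or.inl rfl))))
        · have hz : z ∈ T.neighborSet y := hT
          rw [hNb] at hz
          rcases hz with rfl | rfl | rfl
          · exact Or.inr (Sym2.eq_swap ▸ Or.inl rfl)
          · exact Or.inr (Or.inr (Or.inr (Sym2.eq_swap ▸ Or.inl rfl)))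
          · exact Or.inr (Or.inr (Or.inr (Or.inr (Or.inr rfl))))
      have hS6card :
          ({s(x,a), s(x,b), s(x,w), s(a,b), s(a,w), s(b,w)} : Set (Sym2 V)).ncard ≤ 6 := by
        calc ({s(x,a), s(x,b), s(x,w), s(a,b), s(a,w), s(b,w)} : Set (Sym2 V)).ncard
            ≤ ({s(x,b), s(x,w), s(a,b), s(a,w), s(b,w)} : Set (Sym2 V)).ncard + 1 :=
              Set.ncard_insert_le _ _
          _ ≤ ({s(x,w), s(a,b), s(a,w), s(b,w)} : Set (Sym2 V)).ncard + 1 + 1 := by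
              have := Set.ncard_insert_le (s(x,b)) ({s(x,w), s(a,b), s(a,w), s(b,w)} : Set (Sym2 V))
              omega
          _ ≤ ({s(a,b), s(a,w), s(b,w)} : Set (Sym2 V)).ncard + 1 + 1 + 1 := by
              have := Set.ncard_insert_le (s(x,w)) ({s(a,b), s(a,w), s(b,w)} : Set (Sym2 V))
              omega
          _ ≤ ({s(a,w), s(b,w)} : Set (Sym2 V)).ncard + 1 + 1 + 1 + 1 := by
              have := Set.ncard_insert_le (s(a,b)) ({s(a,w), s(b,w)} : Set (Sym2 V))
              omega
          _ ≤ ({s(b,w)} : Set (Sym2 V)).ncard + 1 + 1 + 1 + 1 + 1 := by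
              have := Set.ncard_insert_le (s(a,w)) ({s(b,w)} : Set (Sym2 V))
              omega
          _ ≤ 6 := by rw [Set.ncard_singleton]
      -- cardinality of the clique set of I is at least 1, and deleting x kills s
      have hsR : s ∈ {t : Finset V | I.spanningCoe.IsNClique 4 t} := hsI
      have hRpos : 1 ≤ ({t : Finset V | I.spanningCoe.IsNClique 4 t}).ncard :=
        (Set.ncard_pos (Set.toFinite _)).mpr ⟨s, hsR⟩
      have huniq : ∀ t : Finset V, I.spanningCoe.IsNClique 4 t → ∀ y, y ∈ t →
          (y = x ∨ y = a ∨ y = b) → t = s := by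
        intro t ht y hyt hy
        have hys : y ∈ s := by rcases hy with rfl | rfl | rfl; exacts [hx, haS, hbS]
        have hNy : T.neighborSet y ⊆ (↑s : Set V) := by
          rw [hsSet]
          rcases hy with rfl | rfl | rfl
          · rw [hNx]; intro z hz
            simp only [Set.mem_insert_iff, Set.mem_singleton_iff] at hz ⊢; tauto
          · rw [hNa]; intro z hz
            simp only [Set.mem_insert_iff, Set.mem_singleton_iff] at hz ⊢; tauto
          · rw [hNb]; intro z hz
            simp only [Set.mem_insert_iff, Set.mem_singleton_iff] at hz ⊢; tauto
        have hts : t ⊆ s := by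
          intro z hzt
          by_cases hzy : z = y
          · rwa [hzy]
          · have hadjyz := ht.1 (by exact_mod_cast hyt) (by exact_mod_cast hzt) (Ne.symm hzy)
            rw [Subgraph.spanningCoe_adj] at hadjyz
            have : z ∈ T.neighborSet y := I.adj_sub hadjyz
            exact_mod_cast hNy this
        exact Finset.eq_of_subset_of_card_le hts (by rw [ht.2, hsT.2])
      have hRle : ∀ (J : T.Subgraph), J ≤ I → x ∉ J.verts →
          {t : Finset V | J.spanningCoe.IsNClique 4 t}.ncard + 1
            ≤ ({t : Finset V | I.spanningCoe.IsNClique 4 t}).ncard := by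
        intro J hJI hxJ
        have hmono : J.spanningCoe ≤ I.spanningCoe := by
          intro y z h
          rw [Subgraph.spanningCoe_adj] at h ⊢
          exact hJI.2 h
        have hsub : {t : Finset V | J.spanningCoe.IsNClique 4 t}
            ⊆ {t : Finset V | I.spanningCoe.IsNClique 4 t} \ {s} := by
          intro t ht
          refine ⟨ht.mono hmono, ?_⟩
          simp only [Set.mem_singleton_iff]
          intro hts
          subst hts
          obtain ⟨z, hzt, hzx⟩ := Finset.exists_mem_ne (by rw [ht.2]; omega) x
          have := ht.1 (by exact_mod_cast hx) (by exact_mod_cast hzt) (Ne.symm hzx)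
          rw [Subgraph.spanningCoe_adj] at this
          exact hxJ this.fst_mem
        have h1 := Set.ncard_le_ncard hsub (Set.toFinite _)
        have h2 := Set.ncard_diff_singleton_of_mem hsR
        omega
      have hn4 : 4 ≤ I.verts.ncard := by
        have hsv : (↑s : Set V) ⊆ I.verts := by
          rw [hsSet]
          intro y hy
          rcases hy with rfl | rfl | rfl | rfl
          exacts [hxv, hav, hbv, hwv]
        have : (↑s : Set V).ncard = 4 := by rw [Set.ncard_coe_finset, hsT.2]
        rw [← this]
        exact Set.ncard_le_ncard hsv (Set.toFinite _)
      -- the subgraph with x, a, b removed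
      have hwS3 : w ∉ ({x, a, b} : Set V) := by
        simp only [Set.mem_insert_iff, Set.mem_singleton_iff]
        push_neg
        exact ⟨Ne.symm hxw, Ne.symm haw, Ne.symm hbw⟩
      have hS3sub : ({x, a, b} : Set V) ⊆ I.verts := by
        intro y hy
        rcases hy with rfl | rfl | rfl
        exacts [hxv, hav, hbv]
      have hS3card : ({x, a, b} : Set V).ncard = 3 := by
        rw [Set.ncard_eq_three]
        exact ⟨x, a, b, hxa, hxb, hab, rfl⟩
      have hn'card : (I.deleteVerts {x, a, b}).verts.ncard = I.verts.ncard - 3 := by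
        rw [Subgraph.deleteVerts_verts, Set.ncard_diff hS3sub, hS3card]
      have hwI' : w ∈ (I.deleteVerts {x, a, b}).verts := by
        rw [Subgraph.deleteVerts_verts]
        exact ⟨hwv, hwS3⟩
      have hxI' : x ∉ (I.deleteVerts {x, a, b}).verts := by
        rw [Subgraph.deleteVerts_verts]
        intro h
        exact h.2 (by simp)
      by_cases hwadj : ∃ u, (I.deleteVerts {x, a, b}).Adj w u
      · -- Case A1 : w is not isolated after deleting x, a, b
        have hcov : I.edgeSet ⊆ (I.deleteVerts {x, a, b}).edgeSet ∪
            ({s(x,a), s(x,b), s(x,w), s(a,b), s(a,w), s(b,w)} : Set (Sym2 V)) := by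
          intro e he
          induction e with
          | _ y z =>
            have hyz : I.Adj y z := Subgraph.mem_edgeSet.mp he
            by_cases hy : y = x ∨ y = a ∨ y = b
            · exact Or.inr (hS6 y z hyz hy)
            by_cases hz : z = x ∨ z = a ∨ z = b
            · exact Or.inr (Set.mem_of_eq_of_mem Sym2.eq_swap (hS6 z y hyz.symm hz))
            · left
              rw [Subgraph.mem_edgeSet, Subgraph.deleteVerts_adj]
              refine ⟨hyz.fst_mem, by simpa using hy, hyz.snd_mem, by simpa using hz, hyz⟩
        have hE : I.edgeSet.ncard ≤ (I.deleteVerts {x, a, b}).edgeSet.ncard + 6 := by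
          have h1 := Set.ncard_le_ncard hcov (Set.toFinite _)
          have h2 := Set.ncard_union_le (I.deleteVerts {x, a, b}).edgeSet
            ({s(x,a), s(x,b), s(x,w), s(a,b), s(a,w), s(b,w)} : Set (Sym2 V))
          omega
        have hc : Nat.card I.coe.ConnectedComponent
            ≤ Nat.card (I.deleteVerts {x, a, b}).coe.ConnectedComponent := by
          apply card_comp_le_of_cover I _ Subgraph.deleteVerts_le
          intro v hv
          by_cases hvS : v ∈ ({x, a, b} : Set V)
          · refine ⟨w, hwI', ?_⟩
            have hadjvw : I.Adj v w := by
              have hvs : v ∈ s := by rcases hvS with rfl | rfl | rfl; exacts [hx, haS, hbS]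
              have hvw : v ≠ w := by rcases hvS with rfl | rfl | rfl; exacts [hxw, haw, hbw]
              exact hIadj v hvs w hwS hvw
            exact (SimpleGraph.Adj.reachable (by rw [Subgraph.coe_adj]; exact hadjvw))
          · exact ⟨v, ⟨hv, hvS⟩, Reachable.refl _⟩
        have hne' : (I.deleteVerts {x, a, b}).verts.Nonempty := ⟨w, hwI'⟩
        have hiso' : ∀ v ∈ (I.deleteVerts {x, a, b}).verts, ∃ u,
            (I.deleteVerts {x, a, b}).Adj v u := by
          intro v hv
          have hv' := hv
          rw [Subgraph.deleteVerts_verts] at hv'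
          obtain ⟨hvI, hvS⟩ := hv'
          have hvS' : ¬(v = x ∨ v = a ∨ v = b) := by simpa using hvS
          push_neg at hvS'
          obtain ⟨u, hu⟩ := hiso v hvI
          by_cases huS : u = x ∨ u = a ∨ u = b
          · have hvw : v = w := by
              have hTuv : v ∈ T.neighborSet u := (I.adj_sub hu).symm
              rcases huS with rfl | rfl | rfl
              · rw [hNx] at hTuv
                rcases hTuv with h | h | h
                exacts [absurd h hvS'.2.1, absurd h hvS'.2.2, h]
              · rw [hNa] at hTuv
                rcases hTuv with h | h | h
                exacts [absurd h hvS'.1, absurd h hvS'.2.2, h]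
              · rw [hNb] at hTuv
                rcases hTuv with h | h | h
                exacts [absurd h hvS'.1, absurd h hvS'.2.1, h]
            rw [hvw]
            exact hwadj
          · refine ⟨u, ?_⟩
            rw [Subgraph.deleteVerts_adj]
            exact ⟨hvI, hvS, hu.snd_mem, by simpa using huS, hu⟩
        have hIH := ih ((I.deleteVerts {x, a, b}).verts.ncard)
          (by omega) _ rfl hne' hiso'
        have hr' := hRle (I.deleteVerts {x, a, b}) Subgraph.deleteVerts_le hxI'
        omega
      · -- Case A2 : w becomes isolated; delete all of x, a, b, w
        have hS4sub : ({x, a, b, w} : Set V) ⊆ I.verts := by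
          intro y hy
          rcases hy with rfl | rfl | rfl | rfl
          exacts [hxv, hav, hbv, hwv]
        have hS4card : ({x, a, b, w} : Set V).ncard = 4 := by
          rw [Set.ncard_insert_of_notMem (by
            simp only [Set.mem_insert_iff, Set.mem_singleton_iff]
            push_neg
            exact ⟨hxa, hxb, hxw⟩)]
          rw [Set.ncard_eq_three.mpr ⟨a, b, w, hab, haw, hbw, rfl⟩]
        have hn''card : (I.deleteVerts {x, a, b, w}).verts.ncard = I.verts.ncard - 4 := by
          rw [Subgraph.deleteVerts_verts, Set.ncard_diff hS4sub, hS4card]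
        have hxI'' : x ∉ (I.deleteVerts {x, a, b, w}).verts := by
          rw [Subgraph.deleteVerts_verts]
          intro h
          exact h.2 (by simp)
        have hcov2 : I.edgeSet ⊆ (I.deleteVerts {x, a, b, w}).edgeSet ∪
            ({s(x,a), s(x,b), s(x,w), s(a,b), s(a,w), s(b,w)} : Set (Sym2 V)) := by
          intro e he
          induction e with
          | _ y z =>
            have hyz : I.Adj y z := Subgraph.mem_edgeSet.mp he
            by_cases hy : y = x ∨ y = a ∨ y = b
            · exact Or.inr (hS6 y z hyz hy)
            by_cases hz : z = x ∨ z = a ∨ z = b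
            · exact Or.inr (Set.mem_of_eq_of_mem Sym2.eq_swap (hS6 z y hyz.symm hz))
            push_neg at hy hz
            by_cases hyw : y = w
            · exfalso
              apply hwadj
              refine ⟨z, ?_⟩
              rw [Subgraph.deleteVerts_adj]
              refine ⟨hwv, hwS3, hyz.snd_mem, ?_, hyw ▸ hyz⟩
              simp only [Set.mem_insert_iff, Set.mem_singleton_iff]
              push_neg
              exact hz
            by_cases hzw : z = w
            · exfalso
              apply hwadj
              refine ⟨y, ?_⟩
              rw [Subgraph.deleteVerts_adj]
              refine ⟨hwv, hwS3, hyz.fst_mem, ?_, hzw ▸ hyz.symm⟩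
              simp only [Set.mem_insert_iff, Set.mem_singleton_iff]
              push_neg
              exact hy
            · left
              rw [Subgraph.mem_edgeSet, Subgraph.deleteVerts_adj]
              refine ⟨hyz.fst_mem, ?_, hyz.snd_mem, ?_, hyz⟩
              · simp only [Set.mem_insert_iff, Set.mem_singleton_iff]
                push_neg
                exact ⟨hy.1, hy.2.1, hy.2.2, hyw⟩
              · simp only [Set.mem_insert_iff, Set.mem_singleton_iff]
                push_neg
                exact ⟨hz.1, hz.2.1, hz.2.2, hzw⟩
        have hE2 : I.edgeSet.ncard ≤ (I.deleteVerts {x, a, b, w}).edgeSet.ncard + 6 := by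
          have h1 := Set.ncard_le_ncard hcov2 (Set.toFinite _)
          have h2 := Set.ncard_union_le (I.deleteVerts {x, a, b, w}).edgeSet
            ({s(x,a), s(x,b), s(x,w), s(a,b), s(a,w), s(b,w)} : Set (Sym2 V))
          omega
        have hreachS4 : ∀ v (hv : v ∈ I.verts), v ∈ ({x, a, b, w} : Set V) →
            I.coe.Reachable ⟨v, hv⟩ ⟨x, hxv⟩ := by
          intro v hv hvS
          have hadjvx : v = x ∨ I.Adj v x := by
            rcases hvS with h | h | h | h
            · exact Or.inl h
            · exact Or.inr (by rw [h]; exact hIadj a haS x hx (Ne.symm hxa))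
            · exact Or.inr (by rw [h]; exact hIadj b hbS x hx (Ne.symm hxb))
            · exact Or.inr (by rw [h]; exact hIadj w hwS x hx (Ne.symm hxw))
          rcases hadjvx with h | h
          · subst h
            exact Reachable.refl _
          · exact SimpleGraph.Adj.reachable (by rw [Subgraph.coe_adj]; exact h)
        by_cases hne'' : (I.deleteVerts {x, a, b, w}).verts.Nonempty
        · have hc2 : Nat.card I.coe.ConnectedComponent
              ≤ Nat.card (I.deleteVerts {x, a, b, w}).coe.ConnectedComponent + 1 := by
            apply card_comp_le_succ_of_cover I _ Subgraph.deleteVerts_le x hxv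
            intro v hv
            by_cases hvS : v ∈ ({x, a, b, w} : Set V)
            · exact Or.inr (hreachS4 v hv hvS)
            · exact Or.inl ⟨v, ⟨hv, hvS⟩, Reachable.refl _⟩
          have hiso'' : ∀ v ∈ (I.deleteVerts {x, a, b, w}).verts, ∃ u,
              (I.deleteVerts {x, a, b, w}).Adj v u := by
            intro v hv
            have hv' := hv
            rw [Subgraph.deleteVerts_verts] at hv'
            obtain ⟨hvI, hvS⟩ := hv'
            have hvS' : ¬(v = x ∨ v = a ∨ v = b ∨ v = w) := by simpa using hvS
            push_neg at hvS'
            obtain ⟨u, hu⟩ := hiso v hvI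
            have huS : ¬(u = x ∨ u = a ∨ u = b ∨ u = w) := by
              have hTuv : v ∈ T.neighborSet u := (I.adj_sub hu).symm
              rintro (rfl | rfl | rfl | rfl)
              · rw [hNx] at hTuv
                rcases hTuv with h | h | h
                exacts [hvS'.2.1 h, hvS'.2.2.1 h, hvS'.2.2.2 h]
              · rw [hNa] at hTuv
                rcases hTuv with h | h | h
                exacts [hvS'.1 h, hvS'.2.2.1 h, hvS'.2.2.2 h]
              · rw [hNb] at hTuv
                rcases hTuv with h | h | h
                exacts [hvS'.1 h, hvS'.2.1 h, hvS'.2.2.2 h]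
              · apply hwadj
                refine ⟨v, ?_⟩
                rw [Subgraph.deleteVerts_adj]
                refine ⟨hwv, hwS3, hvI, ?_, hu.symm⟩
                simp only [Set.mem_insert_iff, Set.mem_singleton_iff]
                push_neg
                exact ⟨hvS'.1, hvS'.2.1, hvS'.2.2.1⟩
            refine ⟨u, ?_⟩
            rw [Subgraph.deleteVerts_adj]
            exact ⟨hvI, hvS, hu.snd_mem, by simpa using huS, hu⟩
          have hIH := ih ((I.deleteVerts {x, a, b, w}).verts.ncard)
            (by omega) _ rfl hne'' hiso''
          have hr'' := hRle (I.deleteVerts {x, a, b, w}) Subgraph.deleteVerts_le hxI''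
          omega
        · -- the component is exactly the K₄
          have hvsub : I.verts ⊆ ({x, a, b, w} : Set V) := by
            intro v hv
            by_contra h
            exact hne'' ⟨v, by rw [Subgraph.deleteVerts_verts]; exact ⟨hv, h⟩⟩
          have hveq : I.verts = ({x, a, b, w} : Set V) := Set.Subset.antisymm hvsub hS4sub
          have hncard : I.verts.ncard = 4 := by rw [hveq, hS4card]
          have hEsub : I.edgeSet ⊆
              ({s(x,a), s(x,b), s(x,w), s(a,b), s(a,w), s(b,w)} : Set (Sym2 V)) := by
            intro e he
            induction e with
            | _ y z =>
              have hyz : I.Adj y z := Subgraph.mem_edgeSet.mp he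
              by_cases hy : y = x ∨ y = a ∨ y = b
              · exact hS6 y z hyz hy
              by_cases hz : z = x ∨ z = a ∨ z = b
              · exact Set.mem_of_eq_of_mem Sym2.eq_swap (hS6 z y hyz.symm hz)
              · exfalso
                have hyv := hyz.fst_mem
                rw [hveq] at hyv
                have hzv := hyz.snd_mem
                rw [hveq] at hzv
                have hyw : y = w := by
                  rcases hyv with h | h | h | h
                  exacts [absurd (Or.inl h) hy, absurd (Or.inr (Or.inl h)) hy,
                    absurd (Or.inr (Or.inr h)) hy, h]
                have hzw : z = w := by
                  rcases hzv with h | h | h | h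
                  exacts [absurd (Or.inl h) hz, absurd (Or.inr (Or.inl h)) hz,
                    absurd (Or.inr (Or.inr h)) hz, h]
                exact (I.adj_sub hyz).ne (hyw.trans hzw.symm)
          have hE3 : I.edgeSet.ncard ≤ 6 := by
            have := Set.ncard_le_ncard hEsub (Set.toFinite _)
            omega
          have hc3 : Nat.card I.coe.ConnectedComponent ≤ 1 := by
            apply card_comp_le_one I x hxv
            intro v hv
            exact hreachS4 v hv (hveq ▸ hv)
          omega
    · -- Case B : no K₄, split off the component of v₀
      obtain ⟨v₀, hv₀⟩ := hne
      set K : Set V := {v | ∃ h : v ∈ I.verts, I.coe.Reachable ⟨v, h⟩ ⟨v₀, hv₀⟩} with hKdef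
      have hKsub : K ⊆ I.verts := fun v hv => hv.1
      have hv₀K : v₀ ∈ K := ⟨hv₀, Reachable.refl _⟩
      have hcl : ∀ p q : V, I.Adj p q → p ∈ K → q ∈ K := by
        intro p q hpq hp
        obtain ⟨hpv, hpr⟩ := hp
        refine ⟨hpq.snd_mem, ?_⟩
        exact (SimpleGraph.Adj.reachable
          (by rw [Subgraph.coe_adj]; exact hpq.symm)).trans hpr
      -- lifting walks into the component subgraph
      have hwalk : ∀ (u z : ↥I.verts) (p : I.coe.Walk u z), z = ⟨v₀, hv₀⟩ →
          ∃ hu : ↑u ∈ K, (I.induce K).coe.Reachable ⟨↑u, hu⟩ ⟨v₀, hv₀K⟩ := by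
        intro u z p
        induction p with
        | nil =>
          rintro rfl
          exact ⟨hv₀K, Reachable.refl _⟩
        | @cons u' w' z' hadj p' ihw =>
          rintro rfl
          obtain ⟨hw', hr⟩ := ihw rfl
          have hu' : ↑u' ∈ K := ⟨u'.2, Reachable.trans (SimpleGraph.Adj.reachable hadj) ⟨p'⟩⟩
          refine ⟨hu', ?_⟩
          refine Reachable.trans (SimpleGraph.Adj.reachable ?_) hr
          rw [Subgraph.coe_adj]
          exact ⟨hu', hw', by rwa [Subgraph.coe_adj] at hadj⟩
      have hKreach : ∀ v (hv : v ∈ K),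
          (I.induce K).coe.Reachable ⟨v, hv⟩ ⟨v₀, hv₀K⟩ := by
        intro v hv
        obtain ⟨hvv, hvr⟩ := hv
        obtain ⟨p⟩ := hvr
        obtain ⟨hu, hr⟩ := hwalk ⟨v, hvv⟩ ⟨v₀, hv₀⟩ p rfl
        exact hr
      have hI₁conn : (I.induce K).Connected := by
        rw [Subgraph.connected_iff]
        constructor
        · constructor
          intro p q
          exact (hKreach ↑p p.2).trans (hKreach ↑q q.2).symm
        · exact ⟨v₀, hv₀K⟩
      have hI₁free : (I.induce K).coe.CliqueFree 4 := by
        intro t ht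
        apply hK4
        refine ⟨t.map ⟨Subtype.val, Subtype.val_injective⟩, ?_, ?_⟩
        · intro y hy z hz hyz
          simp only [Finset.coe_map, Set.mem_image, Finset.mem_coe] at hy hz
          obtain ⟨y', hy', rfl⟩ := hy
          obtain ⟨z', hz', rfl⟩ := hz
          have hyz' : y' ≠ z' := fun h => hyz (by rw [h])
          have := ht.1 (by exact_mod_cast hy') (by exact_mod_cast hz') hyz'
          rw [Subgraph.coe_adj] at this
          rw [Subgraph.spanningCoe_adj]
          exact this.2.2
        · rw [Finset.card_map, ht.2]
      have hdeg := h2deg (I.induce K) hI₁conn hI₁free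
      -- vertex counts
      obtain ⟨u₀, hu₀⟩ := hiso v₀ hv₀
      have hu₀K : u₀ ∈ K := hcl v₀ u₀ hu₀ hv₀K
      have hu₀ne : v₀ ≠ u₀ := (I.adj_sub hu₀).ne
      have hK2 : 2 ≤ K.ncard := by
        have hpair : ({v₀, u₀} : Set V) ⊆ K := by
          intro y hy
          rcases hy with rfl | rfl
          exacts [hv₀K, hu₀K]
        have := Set.ncard_le_ncard hpair (Set.toFinite _)
        rw [Set.ncard_pair hu₀ne] at this
        exact this
      -- edge bound for the component
      have hedge₁ : {e | e ∈ (I.induce K).edgeSet ∧ ∀ x ∈ e, x ∈ K}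
          = (I.induce K).edgeSet := by
        ext e
        constructor
        · exact fun h => h.1
        · intro he
          refine ⟨he, ?_⟩
          induction e with
          | _ y z =>
            rw [Subgraph.mem_edgeSet] at he
            intro x hx
            rcases Sym2.mem_iff.mp hx with rfl | rfl
            exacts [he.1, he.2.1]
      have hE₁ := twoDeg_count (I.induce K) hdeg K.ncard K rfl Set.Subset.rfl (by omega)
      rw [hedge₁] at hE₁
      -- splitting the edges
      have hsplit : I.edgeSet ⊆ (I.induce K).edgeSet ∪ (I.induce (I.verts \ K)).edgeSet := by
        intro e he
        induction e with
        | _ y z =>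
          have hyz : I.Adj y z := Subgraph.mem_edgeSet.mp he
          by_cases hy : y ∈ K
          · exact Or.inl (by rw [Subgraph.mem_edgeSet]; exact ⟨hy, hcl y z hyz hy, hyz⟩)
          · have hz : z ∉ K := fun hz => hy (hcl z y hyz.symm hz)
            exact Or.inr (by
              rw [Subgraph.mem_edgeSet]
              exact ⟨⟨hyz.fst_mem, hy⟩, ⟨hyz.snd_mem, hz⟩, hyz⟩)
      have hEsplit : I.edgeSet.ncard ≤ (I.induce K).edgeSet.ncard
          + (I.induce (I.verts \ K)).edgeSet.ncard := by
        have h1 := Set.ncard_le_ncard hsplit (Set.toFinite _)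
        have h2 := Set.ncard_union_le (I.induce K).edgeSet (I.induce (I.verts \ K)).edgeSet
        omega
      have hnsplit : (I.verts \ K).ncard = I.verts.ncard - K.ncard := Set.ncard_diff hKsub
      have hKlen : K.ncard ≤ I.verts.ncard := Set.ncard_le_ncard hKsub (Set.toFinite _)
      by_cases hne₂ : (I.verts \ K).Nonempty
      · -- recurse on the rest
        have hle₂ : I.induce (I.verts \ K) ≤ I :=
          ⟨by rw [Subgraph.induce_verts]; exact Set.diff_subset, fun y z h => h.2.2⟩
        have hiso₂ : ∀ v ∈ (I.induce (I.verts \ K)).verts, ∃ u,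
            (I.induce (I.verts \ K)).Adj v u := by
          intro v hv
          rw [Subgraph.induce_verts] at hv
          obtain ⟨u, hu⟩ := hiso v hv.1
          have huK : u ∉ K := fun huK => hv.2 (hcl u v hu.symm huK)
          exact ⟨u, hv, ⟨hu.snd_mem, huK⟩, hu⟩
        have hc₂ : Nat.card I.coe.ConnectedComponent
            ≤ Nat.card (I.induce (I.verts \ K)).coe.ConnectedComponent + 1 := by
          apply card_comp_le_succ_of_cover I _ hle₂ v₀ hv₀
          intro v hv
          by_cases hvK : v ∈ K
          · exact Or.inr hvK.2
          · exact Or.inl ⟨v, ⟨hv, hvK⟩, Reachable.refl _⟩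
        have hmono₂ : (I.induce (I.verts \ K)).spanningCoe ≤ I.spanningCoe := by
          intro y z h
          rw [Subgraph.spanningCoe_adj] at h ⊢
          exact h.2.2
        have hr₂ : {t : Finset V | (I.induce (I.verts \ K)).spanningCoe.IsNClique 4 t}.ncard
            ≤ ({t : Finset V | I.spanningCoe.IsNClique 4 t}).ncard :=
          Set.ncard_le_ncard (fun t ht => ht.mono hmono₂) (Set.toFinite _)
        have hIv : (I.induce (I.verts \ K)).verts.ncard = (I.verts \ K).ncard := rfl
        have hIH := ih ((I.induce (I.verts \ K)).verts.ncard)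
          (by rw [hIv]; omega) _ rfl
          (by exact hne₂) hiso₂
        omega
      · -- I is connected
        have hvK : I.verts ⊆ K := by
          intro v hv
          by_contra h
          exact hne₂ ⟨v, hv, h⟩
        have hEall : I.edgeSet ⊆ (I.induce K).edgeSet := by
          intro e he
          induction e with
          | _ y z =>
            have hyz : I.Adj y z := Subgraph.mem_edgeSet.mp he
            rw [Subgraph.mem_edgeSet]
            exact ⟨hvK hyz.fst_mem, hvK hyz.snd_mem, hyz⟩
        have hE := Set.ncard_le_ncard hEall (Set.toFinite _)
        have hc : Nat.card I.coe.ConnectedComponent ≤ 1 := by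
          apply card_comp_le_one I v₀ hv₀
          intro v hv
          obtain ⟨hvv, hvr⟩ := hvK hv
          exact hvr
        omega

end Stmt9Aux

/-- Let `T` be a graph such that every connected subgraph without a
`K₄` is 2-degenerate, every `K₄` in `T` contains a 'center' vertex of degree 3, and
deleting the degree-3 vertices from any connected subgraph preserves connectivity.
Then every non-empty subgraph `I ⊆ T` (with no isolated vertices) having `c`
connected components and `r(I)` copies of `K₄` satisfies
`|E(I)| ≤ 2|V(I)| + r(I) - 3c`. -/
theorem stmt_9 {V : Type} [Fintype V] (T : SimpleGraph V)
    (h2deg : ∀ H : T.Subgraph, H.Connected → H.coe.CliqueFree 4 →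
      TwoDegenerate H.coe)
    (hcenter : ∀ s : Finset V, T.IsNClique 4 s →
      ∃ x ∈ s, (T.neighborSet x).ncard = 3)
    (hdel : ∀ H : T.Subgraph, H.Connected →
      ((H.deleteVerts {x | (T.neighborSet x).ncard = 3}).coe).Preconnected) :
    ∀ I : T.Subgraph, I.verts.Nonempty → (∀ v ∈ I.verts, ∃ u, I.Adj v u) →
      (I.edgeSet.ncard : ℤ) ≤ 2 * I.verts.ncard
        + ({s : Finset V | I.spanningCoe.IsNClique 4 s}).ncard
        - 3 * Nat.card I.coe.ConnectedComponent := by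
  intro I hne hiso
  have h := Stmt9Aux.main_aux T h2deg hcenter hdel I.verts.ncard I rfl hne hiso
  omega
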